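/- Let ι be a nonempty finite index type, r ≥ 0 and b real numbers, and C, Ĉ, x : ι → ℝ with Ĉ i ≥ 0 and x i ≥ 0 for all i. If the box reformulated constraint ∑_i C i * x i + r * ∑_i Ĉ i * x i ≤ b holds, then the ellipsoidal reformulated constraint ∑_i C i * x i + r * √(∑_i (Ĉ i)² * (x i)²) ≤ b holds, and then the polyhedral reformulated constraint ∑_i C i * x i + r * (max over i of Ĉ i * x i) ≤ b holds. -/

import Mathlib

theorem reformulated_constraints_nesting
    {ι : Type*} [Fintype ι] [Nonempty ι] (r b : ℝ) (hr : 0 ≤ r)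
    (C Chat x : ι → ℝ) (hChat : ∀ i, 0 ≤ Chat i) (hx : ∀ i, 0 ≤ x i) :
    ((∑ i, C i * x i) + r * ∑ i, Chat i * x i ≤ b →
      (∑ i, C i * x i) + r * Real.sqrt (∑ i, (Chat i) ^ 2 * (x i) ^ 2) ≤ b) ∧
    ((∑ i, C i * x i) + r * Real.sqrt (∑ i, (Chat i) ^ 2 * (x i) ^ 2) ≤ b →
      (∑ i, C i * x i) +
        r * (Finset.univ.sup' Finset.univ_nonempty fun i => Chat i * x i) ≤ b) := by
  have hnn : ∀ i, 0 ≤ Chat i * x i := fun i => mul_nonneg (hChat i) (hx i)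
  have hsq : ∀ i, (Chat i) ^ 2 * (x i) ^ 2 = (Chat i * x i) ^ 2 := fun i => (mul_pow _ _ _).symm
  constructor
  · intro h
    refine le_trans (add_le_add (le_refl _) (mul_le_mul_of_nonneg_left ?_ hr)) h
    simp only [hsq]
    have h1 : ∑ i, (Chat i * x i) ^ 2 ≤ (∑ i, Chat i * x i) ^ 2 :=
      Finset.sum_sq_le_sq_sum_of_nonneg (fun i _ => hnn i)
    calc Real.sqrt (∑ i, (Chat i * x i) ^ 2) ≤ Real.sqrt ((∑ i, Chat i * x i) ^ 2) :=
          Real.sqrt_le_sqrt h1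
      _ = ∑ i, Chat i * x i := Real.sqrt_sq (Finset.sum_nonneg fun i _ => hnn i)
  · intro h
    refine le_trans (add_le_add (le_refl _) (mul_le_mul_of_nonneg_left ?_ hr)) h
    refine Finset.sup'_le _ _ fun j _ => ?_
    simp only [hsq]
    have : (Chat j * x j) ^ 2 ≤ ∑ i, (Chat i * x i) ^ 2 :=
      Finset.single_le_sum (f := fun i => (Chat i * x i) ^ 2) (fun i _ => sq_nonneg _)
        (Finset.mem_univ j)
    calc Chat j * x j = Real.sqrt ((Chat j * x j) ^ 2) := (Real.sqrt_sq (hnn j)).symm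
      _ ≤ _ := Real.sqrt_le_sqrt this
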